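/- For a finite Coxeter system (W,S) and J ⊆ S, the element w₀(J)·w₀(J∩J') lies in the parabolic quotient W^{J'}, i.e., it has no right descents in J'. -/

import Mathlib

namespace Cox

variable {B : Type*} {W : Type*} [Group W] {M : CoxeterMatrix B} (cs : CoxeterSystem M W)

/-- One step of Bruhat order: right-multiply by a reflection, increasing length. -/
def lt1 (u v : W) : Prop :=
  (∃ t : W, cs.IsReflection t ∧ v = u * t) ∧ cs.length u < cs.length v

/-- The (strong) Bruhat order on `W`. -/
def le (u v : W) : Prop := Relation.ReflTransGen (lt1 cs) u v

/-- The support of `w`: the simple reflections lying below `w` in Bruhat order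
(equivalently, appearing in any reduced word for `w`). -/
def supp (w : W) : Set B := {i | le cs (cs.simple i) w}

/-- The standard parabolic subgroup generated by the simple reflections in `K`. -/
def parab (K : Set B) : Subgroup W := Subgroup.closure (cs.simple '' K)

/-- `x` belongs to the parabolic quotient `W^K`: no right descents in `K`. -/
def InQuot (K : Set B) (x : W) : Prop :=
  ∀ i ∈ K, cs.length x < cs.length (x * cs.simple i)

/-- The left descent set of `v`. -/
def DescL (v : W) : Set B := {i | cs.length (cs.simple i * v) < cs.length v}

/-- `x` is the longest element of the standard parabolic subgroup `W_K`. -/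
def IsLongest (K : Set B) (x : W) : Prop :=
  x ∈ parab cs K ∧ ∀ y ∈ parab cs K, cs.length y ≤ cs.length x

end Cox

open Cox



namespace StmtAux

open CoxeterSystem List
open scoped Classical

variable {B : Type*} {W : Type*} [Group W] {M : CoxeterMatrix B} (cs : CoxeterSystem M W)

local prefix:100 "s" => cs.simple
local prefix:100 "π" => cs.wordProd
local prefix:100 "ℓ" => cs.length

/-- The matrix of the standard bilinear form. -/
noncomputable def gform (M : CoxeterMatrix B) (k l : B) : ℝ := -Real.cos (Real.pi / M k l)

lemma gform_diag (M : CoxeterMatrix B) (k : B) : gform M k k = 1 := by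
  unfold gform
  rw [M.diagonal k]
  norm_num

lemma gform_symm (M : CoxeterMatrix B) (k l : B) : gform M k l = gform M l k := by
  unfold gform
  rw [M.symmetric k l]

/-- Pairing with the basis vector `e k` under the standard bilinear form. -/
noncomputable def gpair (M : CoxeterMatrix B) (k : B) : (B →₀ ℝ) →ₗ[ℝ] ℝ :=
  Finsupp.lsum ℝ (fun l => LinearMap.id.smulRight (gform M k l))

lemma gpair_single (M : CoxeterMatrix B) (k l : B) (x : ℝ) :
    gpair M k (Finsupp.single l x) = x * gform M k l := by
  unfold gpair
  rw [Finsupp.lsum_single]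
  simp

/-- The geometric reflection attached to the generator `k`. -/
noncomputable def gsigma (M : CoxeterMatrix B) (k : B) : Module.End ℝ (B →₀ ℝ) :=
  LinearMap.id - LinearMap.smulRight ((2:ℝ) • gpair M k) (Finsupp.single k 1)

lemma gsigma_apply (M : CoxeterMatrix B) (k : B) (v : B →₀ ℝ) :
    gsigma M k v = v - (2 * gpair M k v) • Finsupp.single k 1 := by
  unfold gsigma
  simp [LinearMap.sub_apply, LinearMap.smulRight_apply, smul_smul]

lemma gsigma_fixed (M : CoxeterMatrix B) (k : B) {v : B →₀ ℝ} (h : gpair M k v = 0) :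
    gsigma M k v = v := by
  rw [gsigma_apply, h]
  simp

lemma gsigma_sq (M : CoxeterMatrix B) (k : B) (v : B →₀ ℝ) :
    gsigma M k (gsigma M k v) = v := by
  rw [gsigma_apply, gsigma_apply, map_sub, map_smul, gpair_single, one_mul, gform_diag,
    smul_eq_mul]
  module

private lemma comb_congr {x1 x2 y1 y2 : ℝ} (v w : B →₀ ℝ) (h1 : x1 = y1) (h2 : x2 = y2) :
    x1 • v + x2 • w = y1 • v + y2 • w := by rw [h1, h2]

lemma gsigma_liftable (M : CoxeterMatrix B) : M.IsLiftable (gsigma M) := by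
  intro k l
  by_cases hkl : k = l
  · subst hkl
    rw [M.diagonal k, pow_one]
    apply LinearMap.ext
    intro v
    rw [Module.End.mul_apply]
    exact (gsigma_sq M k v).trans rfl
  · by_cases hm0 : M k l = 0
    · rw [hm0, pow_zero]
    have hm1 : M k l ≠ 1 := M.off_diagonal k l hkl
    have hm2 : 2 ≤ M k l := by omega
    set m : ℕ := M k l with hmdef
    set θ : ℝ := Real.pi / m with hθ
    set c : ℝ := Real.cos θ with hc
    set sn : ℝ := Real.sin θ with hsn
    have hmpos : (0:ℝ) < (m:ℝ) := by exact_mod_cast (by omega : 0 < m)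
    have hθpos : 0 < θ := div_pos Real.pi_pos hmpos
    have hθlt : θ < Real.pi := by
      rw [hθ]
      apply div_lt_self Real.pi_pos
      exact_mod_cast (by omega : 1 < m)
    have hsnpos : 0 < sn := Real.sin_pos_of_pos_of_lt_pi hθpos hθlt
    have hsne : sn ≠ 0 := ne_of_gt hsnpos
    have hpyth : sn^2 + c^2 = 1 := Real.sin_sq_add_cos_sq θ
    have hsn2 : sn^2 = 1 - c^2 := by linarith
    have hβkl : gform M k l = -c := by rw [hc, hθ, hmdef]; rfl
    have hβlk : gform M l k = -c := by rw [gform_symm]; exact hβkl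
    set ek : B →₀ ℝ := Finsupp.single k 1 with hek
    set el : B →₀ ℝ := Finsupp.single l 1 with hel
    have hpkk : gpair M k ek = 1 := by rw [hek, gpair_single, gform_diag, one_mul]
    have hpkl : gpair M k el = -c := by rw [hel, gpair_single, hβkl, one_mul]
    have hplk : gpair M l ek = -c := by rw [hek, gpair_single, hβlk, one_mul]
    have hpll : gpair M l el = 1 := by rw [hel, gpair_single, gform_diag, one_mul]
    set g : Module.End ℝ (B →₀ ℝ) := gsigma M k * gsigma M l with hg
    have hgek : g ek = (4*c^2-1) • ek + (2*c) • el := by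
      rw [hg, Module.End.mul_apply]
      have h1 : gsigma M l ek = ek + (2*c) • el := by
        rw [gsigma_apply, hplk]
        simp only [← hek, ← hel, smul_eq_mul]
        module
      rw [h1, gsigma_apply, map_add, map_smul, hpkk, hpkl]
      simp only [← hek, ← hel, smul_eq_mul]
      module
    have hgel : g el = (-(2*c)) • ek + (-1 : ℝ) • el := by
      rw [hg, Module.End.mul_apply]
      have h1 : gsigma M l el = (-1:ℝ) • el := by
        rw [gsigma_apply, hpll]
        simp only [← hel, smul_eq_mul]
        module
      rw [h1, map_smul, gsigma_apply, hpkl]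
      simp only [← hek, ← hel, smul_eq_mul]
      module
    have gcomb : ∀ a b : ℝ, g (a • ek + b • el)
        = (a*(4*c^2-1) - 2*c*b) • ek + (2*c*a - b) • el := by
      intro a b
      rw [map_add, map_smul, map_smul, hgek, hgel]
      module
    set Θf : ℂ → (B →₀ ℝ) :=
      fun z => (z.re - c * z.im / sn) • ek + (-(z.im / sn)) • el with hΘf
    set ξ : ℂ := Complex.exp ((-θ : ℝ) * Complex.I) with hξ
    have hξre : ξ.re = c := by
      rw [hξ, Complex.exp_ofReal_mul_I_re, Real.cos_neg, hc]
    have hξim : ξ.im = -sn := by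
      rw [hξ, Complex.exp_ofReal_mul_I_im, Real.sin_neg, hsn]
    have hξ2re : (ξ^2).re = 2*c^2 - 1 := by
      rw [sq, Complex.mul_re, hξre, hξim]
      linarith
    have hξ2im : (ξ^2).im = -(2*c*sn) := by
      rw [sq, Complex.mul_im, hξre, hξim]
      ring
    have hkey : ∀ z : ℂ, g (Θf z) = Θf (ξ^2 * z) := by
      intro z
      simp only [hΘf]
      rw [gcomb]
      have hre : (ξ^2*z).re = (2*c^2 - 1)*z.re + (2*c*sn)*z.im := by
        rw [Complex.mul_re, hξ2re, hξ2im]; ring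
      have him : (ξ^2*z).im = (2*c^2 - 1)*z.im - (2*c*sn)*z.re := by
        rw [Complex.mul_im, hξ2re, hξ2im]; ring
      refine comb_congr _ _ ?_ ?_
      · rw [hre, him]
        field_simp
        linear_combination (-(2*c*z.im)) * hsn2
      · rw [him]
        field_simp
        ring
    have hplane : ∀ (n : ℕ) (z : ℂ), (g^n) (Θf z) = Θf (ξ^(2*n) * z) := by
      intro n
      induction n with
      | zero => intro z; simp
      | succ n ih =>
        intro z
        rw [pow_succ, Module.End.mul_apply, hkey z, ih (ξ^2 * z), ← mul_assoc, ← pow_add,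
          show 2*n+2 = 2*(n+1) from by ring]
    have hξ2m : ξ^(2*m) = 1 := by
      rw [hξ, ← Complex.exp_nat_mul]
      have harg : ((2*m : ℕ) : ℂ) * ((-θ : ℝ) * Complex.I)
          = ((-1 : ℤ)) * (2 * Real.pi * Complex.I) := by
        have hθval : (θ : ℂ) = (Real.pi : ℂ) / (m : ℂ) := by
          rw [hθ]; push_cast; ring
        have hmne : (m : ℂ) ≠ 0 := by
          exact_mod_cast (by omega : m ≠ 0)
        push_cast
        rw [hθval]
        field_simp
      rw [harg, Complex.exp_int_mul_two_pi_mul_I]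
    apply LinearMap.ext
    intro v
    rw [Module.End.one_apply]
    set p : ℝ := gpair M k v with hp
    set q : ℝ := gpair M l v with hq
    set a : ℝ := (p + c*q)/sn^2 with ha
    set b : ℝ := (q + c*p)/sn^2 with hb
    set u : B →₀ ℝ := a • ek + b • el with hu
    have hc2 : 1 - c^2 ≠ 0 := by
      rw [← hsn2]
      exact ne_of_gt (pow_pos hsnpos 2)
    have hpu : gpair M k u = p := by
      rw [hu, map_add, map_smul, map_smul, hpkk, hpkl, smul_eq_mul, smul_eq_mul, ha, hb, hsn2]
      field_simp
      ring
    have hqu : gpair M l u = q := by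
      rw [hu, map_add, map_smul, map_smul, hplk, hpll, smul_eq_mul, smul_eq_mul, ha, hb, hsn2]
      field_simp
      ring
    have hw1 : gpair M k (v - u) = 0 := by rw [map_sub, hpu, ← hp, sub_self]
    have hw2 : gpair M l (v - u) = 0 := by rw [map_sub, hqu, ← hq, sub_self]
    have hfix : ∀ n : ℕ, (g^n) (v - u) = v - u := by
      intro n
      induction n with
      | zero => simp
      | succ n ih =>
        rw [pow_succ, Module.End.mul_apply, hg, Module.End.mul_apply,
          gsigma_fixed M l hw2, gsigma_fixed M k hw1, ← hg, ih]
    have hΘu : Θf ⟨a - b*c, -(b*sn)⟩ = u := by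
      rw [hΘf, hu]
      refine comb_congr _ _ ?_ ?_
      · show ((⟨a - b*c, -(b*sn)⟩ : ℂ).re - c * (⟨a - b*c, -(b*sn)⟩ : ℂ).im / sn) = a
        show (a - b*c) - c * (-(b*sn)) / sn = a
        field_simp
        ring
      · show -((⟨a - b*c, -(b*sn)⟩ : ℂ).im / sn) = b
        show -((-(b*sn)) / sn) = b
        field_simp
    have hgu : (g^m) u = u := by
      rw [← hΘu, hplane, hξ2m, one_mul]
    have hsplit : v = (v - u) + u := by abel
    calc ((gsigma M k * gsigma M l)^m) v
        = (g^m) ((v - u) + u) := by rw [← hg, ← hsplit]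
      _ = (g^m) (v - u) + (g^m) u := by rw [map_add]
      _ = (v - u) + u := by rw [hfix, hgu]
      _ = v := by abel

theorem simple_injective : Function.Injective cs.simple := by
  intro i j hij
  by_contra hne
  have hΦ : ∀ b : B, (cs.lift ⟨gsigma M, gsigma_liftable M⟩) (cs.simple b) = gsigma M b :=
    fun b => cs.lift_apply_simple (gsigma_liftable M) b
  have hσ : gsigma M i = gsigma M j := by
    rw [← hΦ i, ← hΦ j, hij]
  have h1 : gsigma M i (Finsupp.single i 1) = (-1 : ℝ) • Finsupp.single i 1 := by
    rw [gsigma_apply, gpair_single, gform_diag]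
    module
  have h2 : gsigma M j (Finsupp.single i 1) =
      Finsupp.single i 1 - (2 * gform M j i) • Finsupp.single j 1 := by
    rw [gsigma_apply, gpair_single, one_mul]
  have := congrArg (fun f : Module.End ℝ (B →₀ ℝ) => (f (Finsupp.single i 1)) i) hσ
  simp only [h1, h2] at this
  rw [Finsupp.smul_apply, Finsupp.sub_apply, Finsupp.smul_apply,
    Finsupp.single_eq_same, Finsupp.single_eq_of_ne' (Ne.symm hne)] at this
  norm_num at this

lemma conj_eq_iff (a b x y : W) : a * x * b = y ↔ x = a⁻¹ * y * b⁻¹ := by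
  constructor
  · intro h; rw [← h]; group
  · intro h; rw [h]; group

/-- The generator images for the parity representation on `W × ZMod 2`. -/
noncomputable def pf (i : B) : Function.End (W × ZMod 2) :=
  fun x => (s i * x.1 * s i, x.2 + if x.1 = s i then 1 else 0)

lemma pf_apply (i : B) (t : W) (ε : ZMod 2) :
    pf cs i (t, ε) = (s i * t * s i, ε + if t = s i then 1 else 0) := rfl

lemma simple_conj_pow (i j : B) (k : ℕ) :
    s j * (s i * s j) ^ k = (s j * s i) ^ k * s j := by
  induction k with
  | zero => simp
  | succ k ih =>
    rw [pow_succ, ← mul_assoc, ih, pow_succ]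
    group

lemma pf_pow_apply (i j : B) (k : ℕ) (t : W) (ε : ZMod 2) :
    ((pf cs i * pf cs j) ^ k) (t, ε) =
      ((s i * s j) ^ k * t * (s j * s i) ^ k,
        ε + ∑ r ∈ Finset.range (2 * k), if t = (s j * s i) ^ r * s j then 1 else 0) := by
  have happ : ∀ (g h : Function.End (W × ZMod 2)) (x : W × ZMod 2), (g * h) x = g (h x) :=
    fun _ _ _ => rfl
  induction k generalizing ε with
  | zero => simp [Function.End.one_def]
  | succ k ih =>
    rw [pow_succ', happ, ih ε, happ, pf_apply, pf_apply, Prod.mk.injEq]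
    have hpk : ((s i * s j : W) ^ k)⁻¹ = (s j * s i) ^ k := by
      rw [← inv_pow]; congr 1; simp [mul_inv_rev, cs.inv_simple]
    have hqk : ((s j * s i : W) ^ k)⁻¹ = (s i * s j) ^ k := by
      rw [← inv_pow]; congr 1; simp [mul_inv_rev, cs.inv_simple]
    constructor
    · rw [pow_succ', pow_succ]; group
    · have key1 : (s j * s i) ^ k * s j * (s i * s j) ^ k = (s j * s i) ^ (2 * k) * s j := by
        rw [mul_assoc, simple_conj_pow, ← mul_assoc, ← pow_add, two_mul]
      have key2 : (s j * s i) ^ k * (s j * s i * s j) * (s i * s j) ^ k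
          = (s j * s i) ^ (2 * k + 1) * s j := by
        calc (s j * s i) ^ k * (s j * s i * s j) * (s i * s j) ^ k
            = (s j * s i) ^ k * (s j * s i) * (s j * (s i * s j) ^ k) := by group
          _ = (s j * s i) ^ k * (s j * s i) * ((s j * s i) ^ k * s j) := by
              rw [simple_conj_pow]
          _ = ((s j * s i) ^ k * (s j * s i) ^ 1 * (s j * s i) ^ k) * s j := by
              rw [pow_one]; group
          _ = (s j * s i) ^ (2 * k + 1) * s j := by
              rw [← pow_add, ← pow_add, show k + 1 + k = 2 * k + 1 from by omega]
      have id1 : ((s i * s j) ^ k * t * (s j * s i) ^ k = s j) ↔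
          (t = (s j * s i) ^ (2 * k) * s j) := by
        rw [conj_eq_iff, hpk, hqk, key1]
      have id2 : (s j * ((s i * s j) ^ k * t * (s j * s i) ^ k) * s j = s i) ↔
          (t = (s j * s i) ^ (2 * k + 1) * s j) := by
        rw [conj_eq_iff, conj_eq_iff, cs.inv_simple, hpk, hqk, key2]
      rw [if_congr id1 rfl rfl, if_congr id2 rfl rfl]
      have h2 : 2 * (k + 1) = (2 * k) + 1 + 1 := by ring
      rw [h2, Finset.sum_range_succ, Finset.sum_range_succ]
      ring

lemma pf_liftable : M.IsLiftable (pf cs) := by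
  intro i j
  funext x
  obtain ⟨t, ε⟩ := x
  rw [pf_pow_apply]
  have hp : (s i * s j) ^ M i j = 1 := cs.simple_mul_simple_pow i j
  have hq : (s j * s i) ^ M i j = 1 := cs.simple_mul_simple_pow' i j
  rw [hp, hq]
  have hsum : ∑ r ∈ Finset.range (2 * M i j),
      (if t = (s j * s i) ^ r * s j then (1 : ZMod 2) else 0) = 0 := by
    rw [two_mul, Finset.sum_range_add]
    have : ∀ r, (if t = (s j * s i) ^ (M i j + r) * s j then (1 : ZMod 2) else 0)
        = if t = (s j * s i) ^ r * s j then 1 else 0 := by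
      intro r
      rw [pow_add, hq, one_mul]
    simp only [this]
    exact CharTwo.add_self_eq_zero _
  rw [hsum]
  show ((1 : W) * t * 1, ε + 0) = (t, ε)
  simp

/-- The parity ("reflection cocycle") representation. -/
noncomputable def prep : W →* Function.End (W × ZMod 2) := cs.lift ⟨pf cs, pf_liftable cs⟩

lemma prep_simple (i : B) : prep cs (s i) = pf cs i := cs.lift_apply_simple (pf_liftable cs) i

lemma prep_wordProd (ω : List B) (t : W) (ε : ZMod 2) :
    prep cs (π ω) (t, ε) = (π ω * t * (π ω)⁻¹, ε + ((cs.rightInvSeq ω).count t : ZMod 2)) := by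
  induction ω generalizing ε with
  | nil => simp [wordProd_nil, Function.End.one_def, map_one]
  | cons i ω ih =>
    have happ : ∀ (g h : Function.End (W × ZMod 2)) (x : W × ZMod 2), (g * h) x = g (h x) :=
      fun _ _ _ => rfl
    rw [cs.wordProd_cons, map_mul, happ, ih ε, prep_simple, pf_apply]
    have hris : cs.rightInvSeq (i :: ω) = ((π ω)⁻¹ * s i * π ω) :: cs.rightInvSeq ω := rfl
    rw [hris, List.count_cons, Prod.mk.injEq]
    constructor
    · rw [mul_inv_rev, cs.inv_simple]; group
    · have hiff : (π ω * t * (π ω)⁻¹ = s i) ↔ ((π ω)⁻¹ * s i * π ω = t) := by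
        rw [conj_eq_iff, inv_inv, eq_comm]
      simp only [beq_iff_eq]
      rw [if_congr hiff rfl rfl]
      push_cast [apply_ite (Nat.cast : ℕ → ZMod 2)]
      ring

/-- The parity of the number of times `t` occurs in the right inversion sequence of any word
for `w`. -/
noncomputable def eta (w t : W) : ZMod 2 := (prep cs w (t, 0)).2

lemma eta_wordProd (ω : List B) (t : W) :
    eta cs (π ω) t = ((cs.rightInvSeq ω).count t : ZMod 2) := by
  unfold eta
  rw [prep_wordProd]
  simp

lemma prep_apply (w t : W) (ε : ZMod 2) :
    prep cs w (t, ε) = (w * t * w⁻¹, ε + eta cs w t) := by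
  obtain ⟨ω, _, rfl⟩ := cs.exists_reduced_word w
  rw [prep_wordProd, eta_wordProd]

lemma eta_mul (u v t : W) : eta cs (u * v) t = eta cs v t + eta cs u (v * t * v⁻¹) := by
  have happ : ∀ (g h : Function.End (W × ZMod 2)) (x : W × ZMod 2), (g * h) x = g (h x) :=
    fun _ _ _ => rfl
  show (prep cs (u * v) (t, 0)).2 = _
  rw [map_mul, happ, prep_apply, prep_apply]
  show 0 + eta cs v t + eta cs u (v * t * v⁻¹) = _
  ring

lemma eta_one (t : W) : eta cs 1 t = 0 := by
  have : (1 : W) = π [] := by simp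
  rw [this, eta_wordProd]
  simp

lemma eta_simple_self (i : B) : eta cs (s i) (s i) = 1 := by
  have : s i = π [i] := by simp
  rw [this, eta_wordProd]
  have : cs.rightInvSeq [i] = [s i] := by simp
  rw [this]
  simp

lemma eta_inv_conj (w x : W) : eta cs w⁻¹ (w * x * w⁻¹) = eta cs w x := by
  have h := eta_mul cs w⁻¹ w x
  rw [inv_mul_cancel, eta_one] at h
  have := CharTwo.add_self_eq_zero (eta cs w x)
  -- h : 0 = eta w x + eta w⁻¹ (w x w⁻¹)
  have h2 : eta cs w x + (eta cs w x + eta cs w⁻¹ (w * x * w⁻¹)) = eta cs w x + 0 := by rw [← h]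
  rw [← add_assoc, CharTwo.add_self_eq_zero, zero_add, add_zero] at h2
  exact h2

lemma eta_reflection_self {t : W} (ht : cs.IsReflection t) : eta cs t t = 1 := by
  obtain ⟨v, i, rfl⟩ := ht
  have h1 : eta cs (v * s i * v⁻¹) (v * s i * v⁻¹)
      = eta cs v⁻¹ (v * s i * v⁻¹) + eta cs (v * s i) (s i) := by
    have := eta_mul cs (v * s i) v⁻¹ (v * s i * v⁻¹)
    rw [mul_assoc] at this ⊢
    rw [this]
    congr 1
    congr 1
    group
  rw [h1, eta_inv_conj]
  have h2 : eta cs (v * s i) (s i) = eta cs (s i) (s i) + eta cs v (s i) := by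
    have := eta_mul cs v (s i) (s i)
    rw [this]
    congr 1
    congr 1
    rw [cs.inv_simple, mul_assoc, cs.simple_mul_simple_self]
    simp
  rw [h2, eta_simple_self]
  linear_combination (CharTwo.add_self_eq_zero (eta cs v (s i)))

lemma eta_eq_zero_of_not_inversion {w t : W} (h : ¬ ℓ (w * t) < ℓ w) : eta cs w t = 0 := by
  obtain ⟨ω, hred, rfl⟩ := cs.exists_reduced_word' w
  rw [eta_wordProd]
  have : t ∉ cs.rightInvSeq ω := by
    intro hmem
    exact h (cs.isRightInversion_of_mem_rightInvSeq hred hmem).2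
  rw [List.count_eq_zero.mpr this]
  simp

lemma eta_eq_one_of_inversion {w t : W} (ht : cs.IsReflection t) (hlt : ℓ (w * t) < ℓ w) :
    eta cs w t = 1 := by
  have hw : w = (w * t) * t := by rw [mul_assoc, ht.mul_self, mul_one]
  have h1 : eta cs ((w * t) * t) t = eta cs t t + eta cs (w * t) (t * t * t⁻¹) := eta_mul ..
  have h2 : t * t * t⁻¹ = t := by rw [ht.mul_self, one_mul, ht.inv]
  rw [← hw, h2, eta_reflection_self cs ht] at h1
  have h3 : eta cs (w * t) t = 0 := by
    apply eta_eq_zero_of_not_inversion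
    rw [mul_assoc, ht.mul_self, mul_one]
    omega
  rw [h3, add_zero] at h1
  exact h1

lemma inversion_of_eta_eq_one {w t : W} (ht : cs.IsReflection t) (h : eta cs w t = 1) :
    ℓ (w * t) < ℓ w := by
  by_contra hn
  rw [eta_eq_zero_of_not_inversion cs hn] at h
  exact zero_ne_one h

/-- Strong exchange property. -/
lemma mem_rightInvSeq_of_inversion {ω : List B} (hred : cs.IsReduced ω) {t : W}
    (ht : cs.IsReflection t) (hlt : ℓ (π ω * t) < ℓ (π ω)) : t ∈ cs.rightInvSeq ω := by
  have h1 : eta cs (π ω) t = 1 := eta_eq_one_of_inversion cs ht hlt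
  rw [eta_wordProd] at h1
  by_contra hmem
  rw [List.count_eq_zero.mpr hmem] at h1
  norm_num at h1

lemma wordProd_mem_closure {K : Set B} {ω : List B} (h : ∀ l ∈ ω, l ∈ K) :
    π ω ∈ Subgroup.closure (cs.simple '' K) := by
  apply Subgroup.list_prod_mem
  intro x hx
  obtain ⟨l, hl, rfl⟩ := List.mem_map.mp hx
  exact Subgroup.subset_closure ⟨l, h l hl, rfl⟩

lemma exists_word_of_mem_closure {K : Set B} {w : W}
    (hw : w ∈ Subgroup.closure (cs.simple '' K)) :
    ∃ ω : List B, (∀ l ∈ ω, l ∈ K) ∧ w = π ω := by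
  induction hw using Subgroup.closure_induction with
  | mem x hx =>
    obtain ⟨l, hl, rfl⟩ := hx
    exact ⟨[l], by simpa using hl, by simp⟩
  | one => exact ⟨[], by simp, by simp⟩
  | mul x y hxm hym hx hy =>
    obtain ⟨ω₁, h₁, rfl⟩ := hx
    obtain ⟨ω₂, h₂, rfl⟩ := hy
    refine ⟨ω₁ ++ ω₂, ?_, by rw [cs.wordProd_append]⟩
    intro l hl
    rcases List.mem_append.mp hl with h' | h'
    exacts [h₁ l h', h₂ l h']
  | inv x hxm hx =>
    obtain ⟨ω, h₁, rfl⟩ := hx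
    exact ⟨ω.reverse, by intro l hl; exact h₁ l (List.mem_reverse.mp hl), by simp⟩

lemma exists_reduced_word_subset (K : Set B) (ω : List B) (h : ∀ l ∈ ω, l ∈ K) :
    ∃ χ : List B, cs.IsReduced χ ∧ (∀ l ∈ χ, l ∈ K) ∧ π χ = π ω := by
  induction ω using List.reverseRecOn with
  | nil => exact ⟨[], by simp [CoxeterSystem.IsReduced], by simp, rfl⟩
  | append_singleton ω₀ k ih =>
    obtain ⟨χ₀, hred₀, hK₀, hπ₀⟩ := ih (fun l hl => h l (List.mem_append.mpr (Or.inl hl)))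
    have hk : k ∈ K := h k (by simp)
    have hπtail : π (ω₀ ++ [k]) = π χ₀ * s k := by
      rw [cs.wordProd_append, hπ₀]; simp
    rcases cs.length_mul_simple (π χ₀) k with hinc | hdec
    · refine ⟨χ₀ ++ [k], ?_, ?_, ?_⟩
      · unfold CoxeterSystem.IsReduced at hred₀ ⊢
        rw [cs.wordProd_append, List.length_append]
        simpa [hred₀] using hinc
      · intro l hl
        rcases List.mem_append.mp hl with h' | h'
        · exact hK₀ l h'
        · rw [List.mem_singleton] at h'; subst h'; exact hk
      · rw [cs.wordProd_append, hπtail]; simp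
    · -- descent: use strong exchange
      have hlt : ℓ (π χ₀ * s k) < ℓ (π χ₀) := by omega
      have hmem : s k ∈ cs.rightInvSeq χ₀ :=
        mem_rightInvSeq_of_inversion cs hred₀ (cs.isReflection_simple k) hlt
      obtain ⟨n, hn, hget⟩ := List.mem_iff_getElem.mp hmem
      have hn' : n < χ₀.length := by simpa using hn
      have hgetD : (cs.rightInvSeq χ₀).getD n 1 = s k := by
        rw [List.getD_eq_getElem _ _ hn, hget]
      have herase : π χ₀ * s k = π (χ₀.eraseIdx n) := by
        rw [← hgetD]; exact cs.wordProd_mul_getD_rightInvSeq χ₀ n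
      refine ⟨χ₀.eraseIdx n, ?_, ?_, ?_⟩
      · unfold CoxeterSystem.IsReduced at hred₀ ⊢
        rw [← herase, List.length_eraseIdx]
        simp only [hn', if_true]
        omega
      · intro l hl
        exact hK₀ l (List.eraseIdx_subset hl)
      · rw [← herase, hπtail]

lemma rightInvSeq_mem_closure {K : Set B} (ω : List B) (h : ∀ l ∈ ω, l ∈ K) :
    ∀ t ∈ cs.rightInvSeq ω, t ∈ Subgroup.closure (cs.simple '' K) := by
  induction ω with
  | nil => simp
  | cons i ω ih =>
    intro t ht
    have hris : cs.rightInvSeq (i :: ω) = ((π ω)⁻¹ * s i * π ω) :: cs.rightInvSeq ω := rfl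
    rw [hris, List.mem_cons] at ht
    rcases ht with rfl | ht
    · have hω : π ω ∈ Subgroup.closure (cs.simple '' K) :=
        wordProd_mem_closure cs (fun l hl => h l (List.mem_cons_of_mem _ hl))
      have hsi : s i ∈ Subgroup.closure (cs.simple '' K) :=
        Subgroup.subset_closure ⟨i, h i (List.mem_cons_self), rfl⟩
      exact mul_mem (mul_mem (inv_mem hω) hsi) hω
    · exact ih (fun l hl => h l (List.mem_cons_of_mem _ hl)) t ht

lemma inversion_mem_closure {K : Set B} {w : W} (hw : w ∈ Subgroup.closure (cs.simple '' K))
    {t : W} (ht : cs.IsRightInversion w t) : t ∈ Subgroup.closure (cs.simple '' K) := by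
  obtain ⟨ω, hK, rfl⟩ := exists_word_of_mem_closure cs hw
  obtain ⟨χ, hred, hKχ, hπ⟩ := exists_reduced_word_subset cs K ω hK
  rw [← hπ] at ht
  have := mem_rightInvSeq_of_inversion cs hred ht.1 ht.2
  exact rightInvSeq_mem_closure cs χ hKχ t this

lemma simple_mem_closure_iff {K : Set B} {i : B}
    (h : cs.simple i ∈ Subgroup.closure (cs.simple '' K)) : i ∈ K := by
  obtain ⟨ω, hK, hπ⟩ := exists_word_of_mem_closure cs h
  obtain ⟨χ, hred, hKχ, hπ'⟩ := exists_reduced_word_subset cs K ω hK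
  rw [← hπ] at hπ'
  have hlen : χ.length = 1 := by
    have := hred
    unfold CoxeterSystem.IsReduced at this
    rw [hπ', cs.length_simple] at this
    omega
  obtain ⟨j, rfl⟩ := List.length_eq_one_iff.mp hlen
  have : s j = s i := by simpa using hπ'
  have := simple_injective cs this
  subst this
  exact hKχ j (by simp)

lemma ncard_inversions (w : W) : {t | cs.IsRightInversion w t}.ncard = ℓ w := by
  obtain ⟨ω, hred, rfl⟩ := cs.exists_reduced_word' w
  have hset : {t | cs.IsRightInversion (π ω) t} = ↑(cs.rightInvSeq ω).toFinset := by
    ext t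
    simp only [Set.mem_setOf_eq, Finset.coe_sort_coe, Finset.mem_coe, List.mem_toFinset]
    constructor
    · intro ht
      exact mem_rightInvSeq_of_inversion cs hred ht.1 ht.2
    · intro ht
      exact cs.isRightInversion_of_mem_rightInvSeq hred ht
  rw [hset, Set.ncard_coe_finset, List.toFinset_card_of_nodup hred.nodup_rightInvSeq,
    cs.length_rightInvSeq]
  exact hred.symm

variable [Finite W]

lemma longest_sub {K : Set B} {x u : W} (hx : x ∈ Subgroup.closure (cs.simple '' K))
    (hmax : ∀ y ∈ Subgroup.closure (cs.simple '' K), ℓ y ≤ ℓ x)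
    (hu : u ∈ Subgroup.closure (cs.simple '' K)) :
    ℓ (x * u) + ℓ u = ℓ x := by
  set P := Subgroup.closure (cs.simple '' K) with hP
  have hinv_of : ∀ t : W, cs.IsReflection t → t ∈ P → cs.IsRightInversion x t := by
    intro t htr htm
    refine ⟨htr, ?_⟩
    have h1 : ℓ (x * t) ≤ ℓ x := hmax _ (mul_mem hx htm)
    have h2 : ℓ (x * t) ≠ ℓ x := htr.length_mul_left_ne x
    omega
  have hTK : {t | cs.IsRightInversion x t} = {t | cs.IsReflection t ∧ t ∈ P} := by
    ext t
    simp only [Set.mem_setOf_eq]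
    constructor
    · intro ht
      exact ⟨ht.1, inversion_mem_closure cs hx ht⟩
    · intro ⟨htr, htm⟩
      exact hinv_of t htr htm
  have hconj : ∀ t : W, cs.IsReflection t → t ∈ P → eta cs x (u * t * u⁻¹) = 1 := by
    intro t htr htm
    have hr : cs.IsReflection (u * t * u⁻¹) := htr.conj u
    have hm : u * t * u⁻¹ ∈ P := mul_mem (mul_mem hu htm) (inv_mem hu)
    exact eta_eq_one_of_inversion cs hr (hinv_of _ hr hm).2
  have key : {t | cs.IsRightInversion (x * u) t}
      = {t | cs.IsReflection t ∧ t ∈ P} \ {t | cs.IsRightInversion u t} := by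
    ext t
    simp only [Set.mem_setOf_eq, Set.mem_diff]
    constructor
    · intro ht
      have htm : t ∈ P := inversion_mem_closure cs (mul_mem hx hu) ht
      refine ⟨⟨ht.1, htm⟩, ?_⟩
      intro hcon
      have e1 : eta cs (x * u) t = 1 := eta_eq_one_of_inversion cs ht.1 ht.2
      have e2 : eta cs u t = 1 := eta_eq_one_of_inversion cs ht.1 hcon.2
      rw [eta_mul, e2, hconj t ht.1 htm] at e1
      exact absurd e1 (by decide)
    · intro ⟨⟨htr, htm⟩, hnot⟩
      refine ⟨htr, ?_⟩
      have e2 : eta cs u t = 0 := by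
        apply eta_eq_zero_of_not_inversion
        intro hcon
        exact hnot ⟨htr, hcon⟩
      have e1 : eta cs (x * u) t = 1 := by
        rw [eta_mul, e2, hconj t htr htm, zero_add]
      exact inversion_of_eta_eq_one cs htr e1
  have hsub : {t | cs.IsRightInversion u t} ⊆ {t | cs.IsReflection t ∧ t ∈ P} := by
    intro t ht
    exact ⟨ht.1, inversion_mem_closure cs hu ht⟩
  have hfin : {t : W | cs.IsReflection t ∧ t ∈ P}.Finite := Set.toFinite _
  have hcard := Set.ncard_diff hsub (Set.toFinite _)
  rw [← key, ← hTK] at hcard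
  rw [ncard_inversions, ncard_inversions, ncard_inversions] at hcard
  have hle : ℓ u ≤ ℓ x := by
    have := Set.ncard_le_ncard hsub hfin
    rw [← hTK] at this
    rw [ncard_inversions, ncard_inversions] at this
    -- this : ℓ u ≤ ℓ x, except hTK direction
    exact this
  omega

theorem main (J Jp : Set B) (wJ wI : W)
    (hJ1 : wJ ∈ Subgroup.closure (cs.simple '' J))
    (hJ2 : ∀ y ∈ Subgroup.closure (cs.simple '' J), ℓ y ≤ ℓ wJ)
    (hI1 : wI ∈ Subgroup.closure (cs.simple '' (J ∩ Jp)))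
    (hI2 : ∀ y ∈ Subgroup.closure (cs.simple '' (J ∩ Jp)), ℓ y ≤ ℓ wI) :
    ∀ i ∈ Jp, ℓ (wJ * wI) < ℓ (wJ * wI * cs.simple i) := by
  intro i hiJp
  have hmono : Subgroup.closure (cs.simple '' (J ∩ Jp)) ≤ Subgroup.closure (cs.simple '' J) :=
    Subgroup.closure_mono (Set.image_mono Set.inter_subset_left)
  have hwI_J : wI ∈ Subgroup.closure (cs.simple '' J) := hmono hI1
  by_cases hiJ : i ∈ J
  · -- i ∈ J ∩ Jp
    have hsiK : s i ∈ Subgroup.closure (cs.simple '' (J ∩ Jp)) :=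
      Subgroup.subset_closure ⟨i, ⟨hiJ, hiJp⟩, rfl⟩
    have hsiJ : s i ∈ Subgroup.closure (cs.simple '' J) :=
      Subgroup.subset_closure ⟨i, hiJ, rfl⟩
    have hlt : ℓ (wI * s i) < ℓ wI := by
      have h1 : ℓ (wI * s i) ≤ ℓ wI := hI2 _ (mul_mem hI1 hsiK)
      have h2 : ℓ (wI * s i) ≠ ℓ wI := cs.length_mul_simple_ne wI i
      omega
    have h1 : ℓ (wJ * wI) + ℓ wI = ℓ wJ := longest_sub cs hJ1 hJ2 hwI_J
    have h2 : ℓ (wJ * (wI * s i)) + ℓ (wI * s i) = ℓ wJ :=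
      longest_sub cs hJ1 hJ2 (mul_mem hwI_J hsiJ)
    rw [← mul_assoc] at h2
    omega
  · -- i ∉ J
    rcases cs.length_mul_simple (wJ * wI) i with hinc | hdec
    · omega
    · exfalso
      have hlt : ℓ (wJ * wI * s i) < ℓ (wJ * wI) := by omega
      have hw : wJ * wI ∈ Subgroup.closure (cs.simple '' J) := mul_mem hJ1 hwI_J
      have : s i ∈ Subgroup.closure (cs.simple '' J) :=
        inversion_mem_closure cs hw ⟨cs.isReflection_simple i, hlt⟩
      exact hiJ (simple_mem_closure_iff cs this)


end StmtAux

theorem stmt7 {B W : Type*} [Group W] [Finite W] {M : CoxeterMatrix B}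
    (cs : CoxeterSystem M W) (J Jp : Set B) (wJ wI : W)
    (hJ : IsLongest cs J wJ) (hI : IsLongest cs (J ∩ Jp) wI) :
    InQuot cs Jp (wJ * wI) := by
  intro i hi
  exact StmtAux.main cs J Jp wJ wI hJ.1 hJ.2 hI.1 hI.2 i hi
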